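/- Let H be a real Hilbert space, z₁,…,z_{n_z}, g₁,…,g_{n_g} ∈ H with Gram matrices Z and G, and A = [a_{kl}] ∈ ℝ^{n_z×n_g}. Then the finite-rank operator K̂ = Σ_{k,l} a_{kl} z_k ⊗ g_l satisfies rank(K̂) = rank(Z A G), where rank(K̂) is the dimension of the range of K̂ and rank(Z A G) is the matrix rank. -/

import Mathlib

open scoped InnerProductSpace

/-- The rank-one operator `v ⊗ u : w ↦ ⟪u, w⟫ v` on a real Hilbert space. -/
noncomputable def rankOne {H : Type*} [NormedAddCommGroup H] [InnerProductSpace ℝ H]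
    (v u : H) : H →L[ℝ] H := (innerSL ℝ u).smulRight v

/-- The Gram matrix of a finite family of vectors. -/
noncomputable def gram {H : Type*} [NormedAddCommGroup H] [InnerProductSpace ℝ H]
    {n : ℕ} (u : Fin n → H) : Matrix (Fin n) (Fin n) ℝ :=
  Matrix.of fun i j => ⟪u i, u j⟫_ℝ

section aux
variable {H : Type*} [NormedAddCommGroup H] [InnerProductSpace ℝ H] {n : ℕ}

noncomputable def synth (u : Fin n → H) : (Fin n → ℝ) →ₗ[ℝ] H :=
  Fintype.linearCombination ℝ u

noncomputable def anal (u : Fin n → H) : H →ₗ[ℝ] (Fin n → ℝ) :=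
  LinearMap.pi fun i => (innerSL ℝ (u i)).toLinearMap

@[simp] lemma synth_apply (u : Fin n → H) (c : Fin n → ℝ) :
    synth u c = ∑ i, c i • u i := Fintype.linearCombination_apply ..

@[simp] lemma anal_apply (u : Fin n → H) (w : H) (i : Fin n) :
    anal u w i = ⟪u i, w⟫_ℝ := rfl

lemma anal_comp_synth (u : Fin n → H) :
    (anal u).comp (synth u) = (gram u).mulVecLin := by
  refine LinearMap.ext fun c => funext fun i => ?_
  simp [gram, Matrix.mulVec, dotProduct, inner_sum, real_inner_smul_right, mul_comm]

lemma synth_eq_zero_of_mulVec {u : Fin n → H} {c : Fin n → ℝ}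
    (h : (gram u).mulVec c = 0) : synth u c = 0 := by
  have hz : anal u (synth u c) = 0 := by
    have := congrArg (fun f => f c) (anal_comp_synth u); simpa [h] using this
  have h2 : ⟪synth u c, synth u c⟫_ℝ = 0 := by
    calc ⟪synth u c, synth u c⟫_ℝ = ∑ i, c i * ⟪u i, synth u c⟫_ℝ := by
          rw [synth_apply, sum_inner]
          exact Finset.sum_congr rfl fun i _ => by rw [real_inner_smul_left]
      _ = 0 := by
          refine Finset.sum_eq_zero fun i _ => ?_
          have : anal u (synth u c) i = 0 := by rw [hz]; rfl
          simp only [anal_apply] at this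
          rw [this, mul_zero]
  exact inner_self_eq_zero.mp h2

lemma ker_synth_eq (u : Fin n → H) :
    LinearMap.ker (synth u) = LinearMap.ker (gram u).mulVecLin := by
  ext c
  simp only [LinearMap.mem_ker, Matrix.mulVecLin_apply]
  constructor
  · intro h
    have h2 := congrArg (fun f => f c) (anal_comp_synth u)
    simp only [LinearMap.comp_apply, Matrix.mulVecLin_apply] at h2
    rw [← h2, h]
    simp only [map_zero]
  · exact synth_eq_zero_of_mulVec

lemma range_anal_eq (u : Fin n → H) :
    LinearMap.range (anal u) = LinearMap.range (gram u).mulVecLin := by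
  apply le_antisymm
  · rintro _ ⟨w, rfl⟩
    haveI : FiniteDimensional ℝ (Submodule.span ℝ (Set.range u)) :=
      FiniteDimensional.span_of_finite ℝ (Set.finite_range u)
    obtain ⟨y, hy, q, hq, rfl⟩ :=
      (Submodule.span ℝ (Set.range u)).exists_add_mem_mem_orthogonal w
    obtain ⟨c, rfl⟩ := (Submodule.mem_span_range_iff_exists_fun ℝ).mp hy
    refine ⟨c, ?_⟩
    have h1 := congrArg (fun f => f c) (anal_comp_synth u)
    simp only [LinearMap.comp_apply] at h1
    rw [← h1]
    funext i
    simp only [anal_apply, synth_apply]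
    rw [inner_add_right]
    have hqi : ⟪u i, q⟫_ℝ = 0 := hq (u i) (Submodule.subset_span ⟨i, rfl⟩)
    rw [hqi, add_zero]
  · rintro _ ⟨c, rfl⟩
    exact ⟨synth u c, by rw [← LinearMap.comp_apply, anal_comp_synth]⟩

end aux

/-- The rank (dimension of the range) of the finite-rank operator
`K̂ = Σ_{k,l} a_{kl} z_k ⊗ g_l` equals the rank of the matrix `Z A G`, where `Z`
and `G` are the Gram matrices of `(z_k)` and `(g_l)`. -/
theorem statement15 {H : Type*} [NormedAddCommGroup H] [InnerProductSpace ℝ H]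
    {nz ng : ℕ} (z : Fin nz → H) (g : Fin ng → H)
    (A : Matrix (Fin nz) (Fin ng) ℝ) :
    Module.rank ℝ
        (LinearMap.range ((∑ k, ∑ l, A k l • rankOne (z k) (g l)) : H →ₗ[ℝ] H)) =
      ((gram z * A * gram g).rank : Cardinal) := by
  have hK : ((∑ k, ∑ l, A k l • rankOne (z k) (g l)) : H →ₗ[ℝ] H)
      = (synth z).comp (A.mulVecLin.comp (anal g)) := by
    refine LinearMap.ext fun w => ?_
    simp only [LinearMap.sum_apply, Finset.sum_apply, LinearMap.smul_apply,
      ContinuousLinearMap.coe_coe, rankOne, ContinuousLinearMap.smulRight_apply,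
      innerSL_apply_apply, LinearMap.comp_apply, synth_apply, anal_apply,
      Matrix.mulVecLin_apply, Matrix.mulVec, dotProduct, Finset.sum_smul, smul_smul]
  rw [hK]
  have h2 : LinearMap.range ((synth z).comp (A.mulVecLin.comp (anal g)))
      = LinearMap.range ((synth z).comp (A.mulVecLin.comp (gram g).mulVecLin)) := by
    rw [LinearMap.range_comp, LinearMap.range_comp, LinearMap.range_comp,
      LinearMap.range_comp, range_anal_eq]
  rw [h2]
  set M := (A.mulVecLin.comp (gram g).mulVecLin) with hM
  have hker : LinearMap.ker ((synth z).comp M)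
      = LinearMap.ker ((gram z).mulVecLin.comp M) := by
    rw [LinearMap.ker_comp, LinearMap.ker_comp, ker_synth_eq]
  have e1 := LinearMap.quotKerEquivRange ((synth z).comp M)
  have e2 := LinearMap.quotKerEquivRange ((gram z).mulVecLin.comp M)
  rw [hker] at e1
  have e : (LinearMap.range ((synth z).comp M)) ≃ₗ[ℝ]
      (LinearMap.range ((gram z).mulVecLin.comp M)) := e1.symm.trans e2
  have hl := e.lift_rank_eq
  have hr : Module.rank ℝ (LinearMap.range ((gram z).mulVecLin.comp M))
      = ((gram z * A * gram g).rank : Cardinal) := by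
    have hcomp : (gram z).mulVecLin.comp M = (gram z * A * gram g).mulVecLin := by
      rw [Matrix.mulVecLin_mul, Matrix.mulVecLin_mul, hM, LinearMap.comp_assoc]
    rw [hcomp, Matrix.rank, Module.finrank_eq_rank]
  rw [hr] at hl
  simpa using hl
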